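/- Let λ ∈ ℝ and μ > 0, and let J ⊂ ℝ be a closed interval of length strictly less than 1/μ. Let φ ∈ C²(J) be real-valued and set S_{λ,μ}φ = φ'' - 2λφ' + (λ² + μ²)φ. If S_{λ,μ}φ does not vanish in the interior of J, then φ has at most two zeros in J. More generally, if S_{λ,μ}φ has at most k zeros in J, then φ has at most 2k + 2 zeros in J. The same two statements hold with S_{λ,μ}φ replaced by T_λφ = φ' - λφ. -/

import Mathlib

noncomputable section
open Set

namespace OUMult

private lemma count_key {S Z : Set ℝ} {m k : ℕ} (hZ : Z.Finite) (hZk : Z.ncard ≤ k)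
    (hsep : ∀ t : Fin (m + 1) → ℝ, (∀ i, t i ∈ S) → StrictMono t →
      ∃ z ∈ Z, z ∈ Set.Ioo (t 0) (t (Fin.last m)))
    (F : Finset ℝ) (hFS : ↑F ⊆ S) (hcard : F.card = m * (k + 1) + 1) : False := by
  set N := m * (k + 1) with hN
  let e := F.orderIsoOfFin hcard
  have hidx : ∀ i : Fin (k + 1), ∀ j : Fin (m + 1), m * i.val + j.val < N + 1 := by
    intro i j
    have hi : i.val ≤ k := Nat.lt_succ_iff.mp i.isLt
    have hj : j.val ≤ m := Nat.lt_succ_iff.mp j.isLt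
    have : m * i.val ≤ m * k := Nat.mul_le_mul_left m hi
    have h2 : m * (k + 1) = m * k + m := by ring
    omega
  have emem : ∀ n : Fin (N + 1), ((e n : F) : ℝ) ∈ S := fun n => hFS (e n).2
  have emono : ∀ n₁ n₂ : Fin (N + 1), n₁ < n₂ → ((e n₁ : F) : ℝ) < ((e n₂ : F) : ℝ) := by
    intro n₁ n₂ h
    exact_mod_cast e.strictMono h
  have hz : ∀ i : Fin (k + 1), ∃ z ∈ Z,
      z ∈ Set.Ioo ((e ⟨m * i.val, hidx i 0⟩ : F) : ℝ)
        ((e ⟨m * i.val + m, hidx i (Fin.last m)⟩ : F) : ℝ) := by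
    intro i
    have := hsep (fun j => ((e ⟨m * i.val + j.val, hidx i j⟩ : F) : ℝ))
      (fun j => emem _)
      (by
        intro j₁ j₂ hj
        exact emono _ _ (by simp only [Fin.mk_lt_mk]; omega))
    simpa using this
  choose z hz1 hz2 using hz
  have zinj : Function.Injective z := by
    have zmono : StrictMono z := by
      intro i j hij
      have h1 : z i < ((e ⟨m * i.val + m, hidx i (Fin.last m)⟩ : F) : ℝ) := (hz2 i).2
      have h2 : ((e ⟨m * j.val, hidx j 0⟩ : F) : ℝ) < z j := (hz2 j).1
      have h3 : ((e ⟨m * i.val + m, hidx i (Fin.last m)⟩ : F) : ℝ) ≤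
          ((e ⟨m * j.val, hidx j 0⟩ : F) : ℝ) := by
        rcases eq_or_lt_of_le (show m * i.val + m ≤ m * j.val by
          have h5 : i.val + 1 ≤ j.val := hij
          have h6 := Nat.mul_le_mul_left m h5
          have h7 : m * (i.val + 1) = m * i.val + m := by ring
          omega) with heq | hlt
        · have heq2 : (⟨m * i.val + m, hidx i (Fin.last m)⟩ : Fin (N + 1)) = ⟨m * j.val, hidx j 0⟩ :=
            Fin.ext heq
          rw [heq2]
        · exact le_of_lt (emono _ _ hlt)
      linarith
    exact zmono.injective
  have hk1 : k + 1 ≤ Z.ncard := by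
    have h1 : (Finset.univ.image z).card = k + 1 := by
      rw [Finset.card_image_of_injective _ zinj, Finset.card_univ, Fintype.card_fin]
    have h2 : ↑(Finset.univ.image z) ⊆ Z := by
      intro x hx
      simp only [Finset.coe_image, Finset.coe_univ, Set.image_univ, Set.mem_range] at hx
      obtain ⟨i, rfl⟩ := hx
      exact hz1 i
    calc k + 1 = (↑(Finset.univ.image z) : Set ℝ).ncard := by rw [Set.ncard_coe_finset, h1]
      _ ≤ Z.ncard := Set.ncard_le_ncard h2 hZ
  omega

private lemma count_aux {S Z : Set ℝ} {m k : ℕ} (hZ : Z.Finite) (hZk : Z.ncard ≤ k)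
    (hsep : ∀ t : Fin (m + 1) → ℝ, (∀ i, t i ∈ S) → StrictMono t →
      ∃ z ∈ Z, z ∈ Set.Ioo (t 0) (t (Fin.last m))) :
    S.Finite ∧ S.ncard ≤ m * (k + 1) := by
  have hfin : S.Finite := by
    by_contra h
    obtain ⟨F, hFS, hcard⟩ := Set.Infinite.exists_subset_card_eq h (m * (k + 1) + 1)
    exact count_key hZ hZk hsep F hFS hcard
  refine ⟨hfin, ?_⟩
  by_contra h
  push_neg at h
  obtain ⟨t, htS, htcard⟩ := Set.exists_subset_card_eq (show m * (k + 1) + 1 ≤ S.ncard from h)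
  have htfin : t.Finite := hfin.subset htS
  refine count_key hZ hZk hsep htfin.toFinset (by simpa using htS) ?_
  rw [← Set.ncard_coe_finset, Set.Finite.coe_toFinset]
  exact htcard

private lemma wronskian_pos (mu c d : ℝ) (hmu : 0 < mu) (hcd : c < d)
    (hlt : mu * (d - c) < Real.pi)
    (ψ ψ1 ψ2 : ℝ → ℝ)
    (hcψ : ContinuousOn ψ (Set.Icc c d)) (hcψ1 : ContinuousOn ψ1 (Set.Icc c d))
    (hψ : ∀ t ∈ Set.Ioo c d, HasDerivAt ψ (ψ1 t) t)
    (hψ1 : ∀ t ∈ Set.Ioo c d, HasDerivAt ψ1 (ψ2 t) t)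
    (hpos : ∀ t ∈ Set.Ioo c d, 0 < ψ2 t + mu ^ 2 * ψ t)
    (h0c : ψ c = 0) (h0d : ψ d = 0) : ψ1 c < 0 ∧ 0 < ψ1 d := by
  have hsindc : 0 < Real.sin (mu * (d - c)) :=
    Real.sin_pos_of_pos_of_lt_pi (by nlinarith) hlt
  constructor
  · set V : ℝ → ℝ := fun t =>
      ψ1 t * Real.sin (mu * (d - t)) + mu * (ψ t * Real.cos (mu * (d - t))) with hV
    have hVd : ∀ t : ℝ, HasDerivAt (fun x => mu * (d - x)) (mu * -1) t := by
      intro t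
      exact (((hasDerivAt_id t).const_sub d).const_mul mu)
    have hVderiv : ∀ t ∈ Set.Ioo c d,
        HasDerivAt V ((ψ2 t + mu ^ 2 * ψ t) * Real.sin (mu * (d - t))) t := by
      intro t ht
      have h1 := ((hψ1 t ht).mul ((hVd t).sin)).add
        ((((hψ t ht).mul ((hVd t).cos))).const_mul mu)
      refine h1.congr_deriv ?_
      ring
    have hc1 : Continuous fun t => Real.sin (mu * (d - t)) := by fun_prop
    have hc2 : Continuous fun t => Real.cos (mu * (d - t)) := by fun_prop
    have hVcont : ContinuousOn V (Set.Icc c d) :=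
      (hcψ1.mul hc1.continuousOn).add (continuousOn_const.mul (hcψ.mul hc2.continuousOn))
    have hmono : StrictMonoOn V (Set.Icc c d) := by
      apply strictMonoOn_of_deriv_pos (convex_Icc c d) hVcont
      intro t ht
      rw [interior_Icc] at ht
      rw [(hVderiv t ht).deriv]
      have hsin : 0 < Real.sin (mu * (d - t)) := by
        apply Real.sin_pos_of_pos_of_lt_pi
        · nlinarith [ht.2]
        · nlinarith [ht.1]
      exact mul_pos (hpos t ht) hsin
    have hlt2 : V c < V d := hmono (Set.left_mem_Icc.mpr hcd.le) (Set.right_mem_Icc.mpr hcd.le) hcd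
    have hVdval : V d = 0 := by simp [hV, h0d]
    have hVcval : V c = ψ1 c * Real.sin (mu * (d - c)) := by simp [hV, h0c]
    rw [hVdval, hVcval] at hlt2
    nlinarith
  · set W : ℝ → ℝ := fun t =>
      ψ1 t * Real.sin (mu * (t - c)) - mu * (ψ t * Real.cos (mu * (t - c))) with hW
    have hWd : ∀ t : ℝ, HasDerivAt (fun x => mu * (x - c)) (mu * 1) t := by
      intro t
      exact (((hasDerivAt_id t).sub_const c).const_mul mu)
    have hWderiv : ∀ t ∈ Set.Ioo c d,
        HasDerivAt W ((ψ2 t + mu ^ 2 * ψ t) * Real.sin (mu * (t - c))) t := by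
      intro t ht
      have h1 := ((hψ1 t ht).mul ((hWd t).sin)).sub
        ((((hψ t ht).mul ((hWd t).cos))).const_mul mu)
      refine h1.congr_deriv ?_
      ring
    have hc1 : Continuous fun t => Real.sin (mu * (t - c)) := by fun_prop
    have hc2 : Continuous fun t => Real.cos (mu * (t - c)) := by fun_prop
    have hWcont : ContinuousOn W (Set.Icc c d) :=
      (hcψ1.mul hc1.continuousOn).sub (continuousOn_const.mul (hcψ.mul hc2.continuousOn))
    have hmono : StrictMonoOn W (Set.Icc c d) := by
      apply strictMonoOn_of_deriv_pos (convex_Icc c d) hWcont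
      intro t ht
      rw [interior_Icc] at ht
      rw [(hWderiv t ht).deriv]
      have hsin : 0 < Real.sin (mu * (t - c)) := by
        apply Real.sin_pos_of_pos_of_lt_pi
        · nlinarith [ht.1]
        · nlinarith [ht.2]
      exact mul_pos (hpos t ht) hsin
    have hlt2 : W c < W d := hmono (Set.left_mem_Icc.mpr hcd.le) (Set.right_mem_Icc.mpr hcd.le) hcd
    have hWcval : W c = 0 := by simp [hW, h0c]
    have hWdval : W d = ψ1 d * Real.sin (mu * (d - c)) := by simp [hW, h0d]
    rw [hWcval, hWdval] at hlt2
    nlinarith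

private lemma no_three (mu : ℝ) (hmu : 0 < mu) {c t2 e : ℝ} (h12 : c < t2) (h23 : t2 < e)
    (hlen : mu * (e - c) < Real.pi)
    (ψ ψ1 ψ2 : ℝ → ℝ)
    (hcψ : ContinuousOn ψ (Set.Icc c e)) (hcψ1 : ContinuousOn ψ1 (Set.Icc c e))
    (hψ : ∀ t ∈ Set.Ioo c e, HasDerivAt ψ (ψ1 t) t)
    (hψ1 : ∀ t ∈ Set.Ioo c e, HasDerivAt ψ1 (ψ2 t) t)
    (hpos : ∀ t ∈ Set.Ioo c e, 0 < ψ2 t + mu ^ 2 * ψ t)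
    (h0c : ψ c = 0) (h02 : ψ t2 = 0) (h0e : ψ e = 0) : False := by
  have hs1 : Set.Icc c t2 ⊆ Set.Icc c e := Set.Icc_subset_Icc le_rfl h23.le
  have hs2 : Set.Icc t2 e ⊆ Set.Icc c e := Set.Icc_subset_Icc h12.le le_rfl
  have ho1 : Set.Ioo c t2 ⊆ Set.Ioo c e := Set.Ioo_subset_Ioo le_rfl h23.le
  have ho2 : Set.Ioo t2 e ⊆ Set.Ioo c e := Set.Ioo_subset_Ioo h12.le le_rfl
  have A := wronskian_pos mu c t2 hmu h12 (by nlinarith) ψ ψ1 ψ2 (hcψ.mono hs1) (hcψ1.mono hs1)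
    (fun t ht => hψ t (ho1 ht)) (fun t ht => hψ1 t (ho1 ht)) (fun t ht => hpos t (ho1 ht)) h0c h02
  have B := wronskian_pos mu t2 e hmu h23 (by nlinarith) ψ ψ1 ψ2 (hcψ.mono hs2) (hcψ1.mono hs2)
    (fun t ht => hψ t (ho2 ht)) (fun t ht => hψ1 t (ho2 ht)) (fun t ht => hpos t (ho2 ht)) h02 h0e
  linarith [A.2, B.1]

/-- Claim on zeros of solutions relative to `S_{λ,μ}` and `T_λ`.
Let `λ ∈ ℝ`, `μ > 0` and let `J = [a,b]` be a closed interval of length `< 1/μ`.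
Let `φ ∈ C²(J)` be real-valued; set `S_{λ,μ}φ = φ'' - 2λφ' + (λ² + μ²)φ` and
`T_λφ = φ' - λφ`. If `S_{λ,μ}φ` does not vanish in the interior of `J`, then `φ` has
at most two zeros in `J`; if `S_{λ,μ}φ` has at most `k` zeros in `J`, then `φ` has at
most `2k + 2` zeros in `J`. The same statements hold with `S_{λ,μ}φ` replaced by
`T_λφ`. -/
theorem zeros_of_damped_oscillation
    (lam mu a b : ℝ) (hmu : 0 < mu) (hab : a ≤ b) (hlen : b - a < 1 / mu)
    (φ φ' φ'' : ℝ → ℝ)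
    (hd1 : ∀ t ∈ Set.Icc a b, HasDerivWithinAt φ (φ' t) (Set.Icc a b) t)
    (hd2 : ∀ t ∈ Set.Icc a b, HasDerivWithinAt φ' (φ'' t) (Set.Icc a b) t)
    (hc2 : ContinuousOn φ'' (Set.Icc a b)) :
    ((∀ t ∈ Set.Ioo a b, φ'' t - 2 * lam * φ' t + (lam ^ 2 + mu ^ 2) * φ t ≠ 0) →
      {t ∈ Set.Icc a b | φ t = 0}.Finite ∧ {t ∈ Set.Icc a b | φ t = 0}.ncard ≤ 2) ∧
    (∀ k : ℕ,
      {t ∈ Set.Icc a b | φ'' t - 2 * lam * φ' t + (lam ^ 2 + mu ^ 2) * φ t = 0}.Finite →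
      {t ∈ Set.Icc a b | φ'' t - 2 * lam * φ' t + (lam ^ 2 + mu ^ 2) * φ t = 0}.ncard ≤ k →
      {t ∈ Set.Icc a b | φ t = 0}.Finite ∧ {t ∈ Set.Icc a b | φ t = 0}.ncard ≤ 2 * k + 2) ∧
    ((∀ t ∈ Set.Ioo a b, φ' t - lam * φ t ≠ 0) →
      {t ∈ Set.Icc a b | φ t = 0}.Finite ∧ {t ∈ Set.Icc a b | φ t = 0}.ncard ≤ 2) ∧
    (∀ k : ℕ,
      {t ∈ Set.Icc a b | φ' t - lam * φ t = 0}.Finite →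
      {t ∈ Set.Icc a b | φ' t - lam * φ t = 0}.ncard ≤ k →
      {t ∈ Set.Icc a b | φ t = 0}.Finite ∧ {t ∈ Set.Icc a b | φ t = 0}.ncard ≤ 2 * k + 2) := by
  have hπ : (1 : ℝ) < Real.pi := by linarith [Real.pi_gt_three]
  set f : ℝ → ℝ := fun t => φ'' t - 2 * lam * φ' t + (lam ^ 2 + mu ^ 2) * φ t with hf
  set g : ℝ → ℝ := fun t => φ' t - lam * φ t with hg
  have hcφ : ContinuousOn φ (Set.Icc a b) := fun t ht => (hd1 t ht).continuousWithinAt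
  have hcφ' : ContinuousOn φ' (Set.Icc a b) := fun t ht => (hd2 t ht).continuousWithinAt
  have hcf : ContinuousOn f (Set.Icc a b) :=
    (hc2.sub (continuousOn_const.mul hcφ')).add (continuousOn_const.mul hcφ)
  have hφat : ∀ t ∈ Set.Ioo a b, HasDerivAt φ (φ' t) t := fun t ht =>
    (hd1 t (Set.Ioo_subset_Icc_self ht)).hasDerivAt (Icc_mem_nhds ht.1 ht.2)
  have hφ'at : ∀ t ∈ Set.Ioo a b, HasDerivAt φ' (φ'' t) t := fun t ht =>
    (hd2 t (Set.Ioo_subset_Icc_self ht)).hasDerivAt (Icc_mem_nhds ht.1 ht.2)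
  set ψ : ℝ → ℝ := fun t => Real.exp (-(lam * t)) * φ t with hψdef
  set ψ1 : ℝ → ℝ := fun t => Real.exp (-(lam * t)) * (φ' t - lam * φ t) with hψ1def
  set ψ2 : ℝ → ℝ := fun t =>
    Real.exp (-(lam * t)) * (φ'' t - 2 * lam * φ' t + lam ^ 2 * φ t) with hψ2def
  have hexpat : ∀ t : ℝ,
      HasDerivAt (fun x => Real.exp (-(lam * x))) (Real.exp (-(lam * t)) * -lam) t := by
    intro t
    have h1 : HasDerivAt (fun x : ℝ => -(lam * x)) (-lam) t := by
      exact ((hasDerivAt_id t).const_mul lam).neg.congr_deriv (by ring)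
    simpa using h1.exp
  have hψat : ∀ t ∈ Set.Ioo a b, HasDerivAt ψ (ψ1 t) t := by
    intro t ht
    have h1 := (hexpat t).mul (hφat t ht)
    have h2 : ψ1 t = Real.exp (-(lam * t)) * -lam * φ t + Real.exp (-(lam * t)) * φ' t := by
      simp only [hψ1def]; ring
    rw [h2]
    exact h1
  have hψ1at : ∀ t ∈ Set.Ioo a b, HasDerivAt ψ1 (ψ2 t) t := by
    intro t ht
    have h1 := (hexpat t).mul ((hφ'at t ht).sub ((hφat t ht).const_mul lam))
    have h2 : ψ2 t = Real.exp (-(lam * t)) * -lam * (φ' t - lam * φ t) +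
        Real.exp (-(lam * t)) * (φ'' t - lam * φ' t) := by
      simp only [hψ2def]; ring
    rw [h2]
    exact h1
  have hcexp : Continuous fun x : ℝ => Real.exp (-(lam * x)) := by fun_prop
  have hcψ : ContinuousOn ψ (Set.Icc a b) := hcexp.continuousOn.mul hcφ
  have hcψ1 : ContinuousOn ψ1 (Set.Icc a b) :=
    hcexp.continuousOn.mul (hcφ'.sub (continuousOn_const.mul hcφ))
  have hlen1 : ∀ x y : ℝ, x ∈ Set.Icc a b → y ∈ Set.Icc a b → mu * (y - x) < Real.pi := by
    intro x y hx hy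
    have h1 : y - x ≤ b - a := by have := hx.1; have := hy.2; linarith
    have h2 : mu * (1 / mu) = 1 := mul_one_div_cancel hmu.ne'
    nlinarith
  -- triple lemma
  have triple : ∀ t1 t2 t3 : ℝ, t1 ∈ Set.Icc a b → t3 ∈ Set.Icc a b → t1 < t2 → t2 < t3 →
      φ t1 = 0 → φ t2 = 0 → φ t3 = 0 → ∃ s ∈ Set.Ioo t1 t3, f s = 0 := by
    intro t1 t2 t3 h1 h3 h12 h23 z1 z2 z3
    by_contra hno
    push_neg at hno
    have hsub : Set.Icc t1 t3 ⊆ Set.Icc a b := Set.Icc_subset_Icc h1.1 h3.2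
    have hosub : Set.Ioo t1 t3 ⊆ Set.Ioo a b := Set.Ioo_subset_Ioo h1.1 h3.2
    have hlen2 : mu * (t3 - t1) < Real.pi := hlen1 t1 t3 h1 h3
    have ht2m : t2 ∈ Set.Ioo t1 t3 := ⟨h12, h23⟩
    have hIVT : ∀ x y : ℝ, x ∈ Set.Ioo t1 t3 → y ∈ Set.Ioo t1 t3 → f x < 0 → 0 < f y → False := by
      intro x y hx hy hfx hfy
      have huIcc : Set.uIcc x y ⊆ Set.Ioo t1 t3 :=
        (Set.ordConnected_Ioo).uIcc_subset hx hy
      have hcont : ContinuousOn f (Set.uIcc x y) :=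
        hcf.mono (huIcc.trans (hosub.trans Set.Ioo_subset_Icc_self))
      have h0m : (0 : ℝ) ∈ Set.uIcc (f x) (f y) := Set.mem_uIcc.mpr (Or.inl ⟨hfx.le, hfy.le⟩)
      obtain ⟨s, hs, hfs⟩ := intermediate_value_uIcc hcont h0m
      exact hno s (huIcc hs) hfs
    have hdich : (∀ t ∈ Set.Ioo t1 t3, 0 < f t) ∨ (∀ t ∈ Set.Ioo t1 t3, f t < 0) := by
      rcases lt_or_gt_of_ne (hno t2 ht2m) with hneg | hpos
      · right
        intro t ht
        rcases lt_or_gt_of_ne (hno t ht) with h | h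
        · exact h
        · exact absurd (hIVT t2 t ht2m ht hneg h) (fun h => h)
      · left
        intro t ht
        rcases lt_or_gt_of_ne (hno t ht) with h | h
        · exact absurd (hIVT t t2 ht ht2m h hpos) (fun h => h)
        · exact h
    have hkey : ∀ t : ℝ, ψ2 t + mu ^ 2 * ψ t = Real.exp (-(lam * t)) * f t := by
      intro t
      simp only [hψdef, hψ2def, hf]
      ring
    have hz1 : ψ t1 = 0 := by simp [hψdef, z1]
    have hz2 : ψ t2 = 0 := by simp [hψdef, z2]
    have hz3 : ψ t3 = 0 := by simp [hψdef, z3]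
    rcases hdich with hp | hn
    · exact no_three mu hmu h12 h23 hlen2 ψ ψ1 ψ2 (hcψ.mono hsub) (hcψ1.mono hsub)
        (fun t ht => hψat t (hosub ht)) (fun t ht => hψ1at t (hosub ht))
        (fun t ht => by rw [hkey t]; exact mul_pos (Real.exp_pos _) (hp t ht))
        hz1 hz2 hz3
    · refine no_three mu hmu h12 h23 hlen2 (fun t => -ψ t) (fun t => -ψ1 t) (fun t => -ψ2 t)
        ((hcψ.mono hsub).neg) ((hcψ1.mono hsub).neg)
        (fun t ht => (hψat t (hosub ht)).neg) (fun t ht => (hψ1at t (hosub ht)).neg)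
        (fun t ht => ?_) (by simp [hz1]) (by simp [hz2]) (by simp [hz3])
      have hcalc : -ψ2 t + mu ^ 2 * -ψ t = Real.exp (-(lam * t)) * (-f t) := by
        calc -ψ2 t + mu ^ 2 * -ψ t = -(ψ2 t + mu ^ 2 * ψ t) := by ring
          _ = -(Real.exp (-(lam * t)) * f t) := by rw [hkey t]
          _ = Real.exp (-(lam * t)) * (-f t) := by ring
      rw [hcalc]
      exact mul_pos (Real.exp_pos _) (by linarith [hn t ht])
  -- pair lemma
  have pair : ∀ t1 t2 : ℝ, t1 ∈ Set.Icc a b → t2 ∈ Set.Icc a b → t1 < t2 →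
      φ t1 = 0 → φ t2 = 0 → ∃ s ∈ Set.Ioo t1 t2, g s = 0 := by
    intro t1 t2 h1 h2 h12 z1 z2
    have hsub : Set.Icc t1 t2 ⊆ Set.Icc a b := Set.Icc_subset_Icc h1.1 h2.2
    have hosub : Set.Ioo t1 t2 ⊆ Set.Ioo a b := Set.Ioo_subset_Ioo h1.1 h2.2
    obtain ⟨s, hs, hs0⟩ := exists_hasDerivAt_eq_zero h12 (hcψ.mono hsub)
      (by simp [hψdef, z1, z2]) (fun t ht => hψat t (hosub ht))
    refine ⟨s, hs, ?_⟩
    have h3 : Real.exp (-(lam * s)) * (φ' s - lam * φ s) = 0 := hs0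
    rcases mul_eq_zero.mp h3 with h | h
    · exact absurd h (Real.exp_ne_zero _)
    · exact h
  refine ⟨?_, ?_, ?_, ?_⟩
  · -- S, nonvanishing case
    intro hno
    have hc := count_aux (S := {t ∈ Set.Icc a b | φ t = 0}) (Z := (∅ : Set ℝ)) (m := 2) (k := 0)
      Set.finite_empty (by simp) ?_
    · exact ⟨hc.1, le_trans hc.2 (by norm_num)⟩
    · intro t htS hmono
      exfalso
      obtain ⟨s, hs, hfs⟩ := triple (t 0) (t 1) (t (Fin.last 2)) (htS 0).1 (htS (Fin.last 2)).1
        (hmono (show (0 : Fin 3) < 1 by decide)) (hmono (show (1 : Fin 3) < Fin.last 2 by decide))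
        (htS 0).2 (htS 1).2 (htS (Fin.last 2)).2
      have hsab : s ∈ Set.Ioo a b :=
        ⟨lt_of_le_of_lt (htS 0).1.1 hs.1, lt_of_lt_of_le hs.2 (htS (Fin.last 2)).1.2⟩
      exact hno s hsab hfs
  · -- S, k zeros case
    intro k hZf hZk
    have hc := count_aux (S := {t ∈ Set.Icc a b | φ t = 0})
      (Z := {t ∈ Set.Icc a b | f t = 0}) (m := 2) (k := k) hZf hZk ?_
    · exact ⟨hc.1, le_trans hc.2 (by omega)⟩
    · intro t htS hmono
      obtain ⟨s, hs, hfs⟩ := triple (t 0) (t 1) (t (Fin.last 2)) (htS 0).1 (htS (Fin.last 2)).1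
        (hmono (show (0 : Fin 3) < 1 by decide)) (hmono (show (1 : Fin 3) < Fin.last 2 by decide))
        (htS 0).2 (htS 1).2 (htS (Fin.last 2)).2
      have hsab : s ∈ Set.Icc a b :=
        ⟨le_trans (htS 0).1.1 hs.1.le, le_trans hs.2.le (htS (Fin.last 2)).1.2⟩
      exact ⟨s, ⟨hsab, hfs⟩, hs⟩
  · -- T, nonvanishing case
    intro hno
    have hc := count_aux (S := {t ∈ Set.Icc a b | φ t = 0}) (Z := (∅ : Set ℝ)) (m := 1) (k := 0)
      Set.finite_empty (by simp) ?_
    · exact ⟨hc.1, le_trans hc.2 (by norm_num)⟩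
    · intro t htS hmono
      exfalso
      obtain ⟨s, hs, hfs⟩ := pair (t 0) (t (Fin.last 1)) (htS 0).1 (htS (Fin.last 1)).1
        (hmono (show (0 : Fin 2) < Fin.last 1 by decide)) (htS 0).2 (htS (Fin.last 1)).2
      have hsab : s ∈ Set.Ioo a b :=
        ⟨lt_of_le_of_lt (htS 0).1.1 hs.1, lt_of_lt_of_le hs.2 (htS (Fin.last 1)).1.2⟩
      exact hno s hsab hfs
  · -- T, k zeros case
    intro k hZf hZk
    have hc := count_aux (S := {t ∈ Set.Icc a b | φ t = 0})
      (Z := {t ∈ Set.Icc a b | g t = 0}) (m := 1) (k := k) hZf hZk ?_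
    · exact ⟨hc.1, le_trans hc.2 (by omega)⟩
    · intro t htS hmono
      obtain ⟨s, hs, hfs⟩ := pair (t 0) (t (Fin.last 1)) (htS 0).1 (htS (Fin.last 1)).1
        (hmono (show (0 : Fin 2) < Fin.last 1 by decide)) (htS 0).2 (htS (Fin.last 1)).2
      have hsab : s ∈ Set.Icc a b :=
        ⟨le_trans (htS 0).1.1 hs.1.le, le_trans hs.2.le (htS (Fin.last 1)).1.2⟩
      exact ⟨s, ⟨hsab, hfs⟩, hs⟩

end OUMult
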